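/- Let b > 1, m > b − 1, and let F be a differentiable cumulative distribution function on [0, ℓ̄] with continuous density f = F′ > 0, F(0) = 0, F(ℓ̄) = 1, and ℓ̄ > b − 1. Define Ψ(ℓ; π) = ((1+m−b)/(1−F(ℓ)))·(π/(1−π)) − (b−1)·F(ℓ)/(1−F(ℓ)). Suppose ℓ′ ∈ (b−1, ℓ̄) satisfies ℓ′ − (1−F(ℓ′))/f(ℓ′) = b − 1, and set π′ = (ℓ′(1−F(ℓ′)) + (b−1)F(ℓ′)) / (1+m−b + ℓ′(1−F(ℓ′)) + (b−1)F(ℓ′)). Then Ψ(ℓ′; π′) = ℓ′, ∂Ψ/∂ℓ (ℓ′; π′) = 1, and π′ > (b−1)/m. -/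

import Mathlib

/-- The reduced-form best-response function. -/
noncomputable def Psi (b m : ℝ) (F : ℝ → ℝ) (l q : ℝ) : ℝ :=
  (1 + m - b) / (1 - F l) * (q / (1 - q)) - (b - 1) * (F l / (1 - F l))

/-- if `ℓ′ ∈ (b−1, ℓ̄)` satisfies `ℓ′ − (1−F(ℓ′))/f(ℓ′) = b − 1` and
`π′ = (ℓ′(1−F(ℓ′)) + (b−1)F(ℓ′)) / (1+m−b + ℓ′(1−F(ℓ′)) + (b−1)F(ℓ′))`, then
`Ψ(ℓ′; π′) = ℓ′`, `∂Ψ/∂ℓ(ℓ′; π′) = 1`, and `π′ > (b−1)/m`. -/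
theorem stmt5 (b m lbar : ℝ) (F f : ℝ → ℝ) (l' q' : ℝ)
    (hb : 1 < b) (hm : b - 1 < m)
    (hF : ∀ x ∈ Set.Icc 0 lbar, HasDerivAt F (f x) x)
    (hf : ContinuousOn f (Set.Icc 0 lbar))
    (hfpos : ∀ x ∈ Set.Icc 0 lbar, 0 < f x)
    (hF0 : F 0 = 0) (hF1 : F lbar = 1)
    (hlbar : b - 1 < lbar)
    (hl' : l' ∈ Set.Ioo (b - 1) lbar)
    (heq : l' - (1 - F l') / f l' = b - 1)
    (hq' : q' = (l' * (1 - F l') + (b - 1) * F l') /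
      (1 + m - b + l' * (1 - F l') + (b - 1) * F l')) :
    Psi b m F l' q' = l' ∧
    HasDerivAt (fun x => Psi b m F x q') 1 l' ∧
    (b - 1) / m < q' := by
  obtain ⟨hl1, hl2⟩ := hl'
  have hb0 : (0:ℝ) < b - 1 := by linarith
  have hl'mem : l' ∈ Set.Icc 0 lbar := ⟨by linarith, le_of_lt hl2⟩
  have hcont : ContinuousOn F (Set.Icc 0 lbar) := fun x hx =>
    (hF x hx).continuousAt.continuousWithinAt
  have hmono : StrictMonoOn F (Set.Icc 0 lbar) := by
    apply strictMonoOn_of_deriv_pos (convex_Icc 0 lbar) hcont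
    intro x hx
    rw [interior_Icc] at hx
    have hx' : x ∈ Set.Icc 0 lbar := Set.Ioo_subset_Icc_self hx
    rw [(hF x hx').deriv]
    exact hfpos x hx'
  have hu1 : F l' < 1 := by
    have := hmono hl'mem (Set.right_mem_Icc.2 (by linarith)) hl2
    rwa [hF1] at this
  have hu0 : 0 < F l' := by
    have := hmono (Set.left_mem_Icc.2 (by linarith)) hl'mem (by linarith)
    rwa [hF0] at this
  have hfl : 0 < f l' := hfpos l' hl'mem
  set u := F l' with hu
  have hupos : 0 < 1 - u := by linarith
  have hune : 1 - u ≠ 0 := ne_of_gt hupos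
  have hmb : 0 < 1 + m - b := by linarith
  have hA : 0 < l' * (1 - u) + (b - 1) * u := by
    have h1 : 0 < l' * (1 - u) := mul_pos (by linarith) hupos
    have h2 : 0 < (b - 1) * u := mul_pos hb0 hu0
    linarith
  have hD : 0 < 1 + m - b + l' * (1 - u) + (b - 1) * u := by linarith
  have hDne : (1 + m - b + l' * (1 - u) + (b - 1) * u) ≠ 0 := ne_of_gt hD
  have hq'lt1 : q' < 1 := by
    rw [hq', div_lt_one hD]; linarith
  have hq'pos : 0 < q' := by
    rw [hq']; exact div_pos hA hD
  have h1q : 0 < 1 - q' := by linarith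
  have h1qv : 1 - q' = (1 + m - b) / (1 + m - b + l' * (1 - u) + (b - 1) * u) := by
    rw [hq', eq_div_iff hDne, sub_mul, one_mul, div_mul_cancel₀ _ hDne]
    ring
  have hc : q' / (1 - q') = (l' * (1 - u) + (b - 1) * u) / (1 + m - b) := by
    rw [h1qv, hq', div_div_div_comm, div_self hDne, div_one]
  have key : 1 - u = f l' * (l' - (b - 1)) := by
    have h : (1 - u) / f l' = l' - (b - 1) := by linarith
    field_simp at h
    linarith [h]
  have goal1 : Psi b m F l' q' = l' := by
    unfold Psi
    rw [← hu, hc]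
    field_simp
    ring
  have hFd : HasDerivAt F (f l') l' := hF l' hl'mem
  have hsub : HasDerivAt (fun x => 1 - F x) (-(f l')) l' := by
    exact hFd.const_sub 1
  have hd1 : HasDerivAt (fun x => (1 + m - b) / (1 - F x))
      ((1 + m - b) * f l' / (1 - u) ^ 2) l' := by
    have h := (hasDerivAt_const l' (1 + m - b)).div hsub hune
    refine h.congr_deriv ?_
    symm
    rw [← hu]
    field_simp
    ring
  have hd2 : HasDerivAt (fun x => F x / (1 - F x)) (f l' / (1 - u) ^ 2) l' := by
    have h := hFd.div hsub hune
    refine h.congr_deriv ?_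
    symm
    rw [← hu]
    field_simp
    ring
  have goal2 : HasDerivAt (fun x => Psi b m F x q') 1 l' := by
    have hd := (hd1.mul_const (q' / (1 - q'))).sub (hd2.const_mul (b - 1))
    unfold Psi
    refine hd.congr_deriv ?_
    rw [hc]
    have e : (1 + m - b) * f l' / (1 - u) ^ 2 * ((l' * (1 - u) + (b - 1) * u) / (1 + m - b))
        - (b - 1) * (f l' / (1 - u) ^ 2) = (1 - u) * (f l' * (l' - (b - 1))) / (1 - u) ^ 2 := by
      field_simp
      ring
    rw [e, ← key, ← sq, div_self (pow_ne_zero 2 hune)]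
  have goal3 : (b - 1) / m < q' := by
    rw [hq', div_lt_div_iff₀ (by linarith) hD]
    have hAgt : 0 < l' * (1 - u) + (b - 1) * u - (b - 1) := by
      nlinarith [mul_pos (sub_pos.2 hl1) hupos]
    nlinarith [mul_pos hmb hAgt]
  exact ⟨goal1, goal2, goal3⟩
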